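/- arXiv:1607.06224 — 5 statements merged into one kernel-verified Lean document; each statement's English description precedes it below -/
import Mathlib

section
/- Let (L_j)_{j≥0} be a sequence of nonnegative real numbers in ℓ^p for some p > 1. Then ∑_{k≥0} sup_{h≥1} (h^{-1} ∑_{j=k-h+1}^{k} L_j)^p ≤ C_p ∑_{j} L_j^p, where C_p depends only on p and L_j is taken to be 0 for j < 0. -/
open Real Finset

lemma geom_zpow_sum_le (a : ℝ) (ha : 1 < a) (S : Finset ℤ) (n0 : ℤ) (hle : ∀ n ∈ S, n ≤ n0) :
    ∑ n ∈ S, a ^ n ≤ a ^ n0 * (1 - a⁻¹)⁻¹ := by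
  have ha0 : (0:ℝ) < a := lt_trans one_pos ha
  have hane : a ≠ 0 := ne_of_gt ha0
  have hr0 : (0:ℝ) ≤ a⁻¹ := by positivity
  have hr1 : a⁻¹ < 1 := inv_lt_one_of_one_lt₀ ha
  have key : ∀ n ∈ S, a ^ n = a ^ n0 * (a⁻¹) ^ ((n0 - n).toNat) := by
    intro n hn
    have h1 : ((n0 - n).toNat : ℤ) = n0 - n := Int.toNat_of_nonneg (by linarith [hle n hn])
    rw [inv_pow, ← zpow_natCast a, h1, ← zpow_neg, ← zpow_add₀ hane]
    congr 1; ring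
  rw [Finset.sum_congr rfl key]
  rw [← Finset.mul_sum]
  have hinj : Set.InjOn (fun n => (n0 - n).toNat) S := by
    intro x hx y hy hxy
    simp only at hxy
    have hx1 : ((n0 - x).toNat : ℤ) = n0 - x := Int.toNat_of_nonneg (by linarith [hle x hx])
    have hy1 : ((n0 - y).toNat : ℤ) = n0 - y := Int.toNat_of_nonneg (by linarith [hle y hy])
    omega
  have := Finset.sum_image (f := fun m : ℕ => (a⁻¹) ^ m)
    (g := fun n : ℤ => (n0 - n).toNat) (s := S) (fun x hx y hy h => hinj hx hy h)
  rw [← this]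
  have hsum : Summable (fun m : ℕ => (a⁻¹) ^ m) := summable_geometric_of_lt_one hr0 hr1
  have h2 : ∑ m ∈ S.image (fun n => (n0 - n).toNat), (a⁻¹) ^ m ≤ ∑' m : ℕ, (a⁻¹) ^ m :=
    Summable.sum_le_tsum _ (fun i _ => by positivity) hsum
  rw [tsum_geometric_of_lt_one hr0 hr1] at h2
  have : (0:ℝ) ≤ a ^ n0 := le_of_lt (zpow_pos ha0 _)
  exact mul_le_mul_of_nonneg_left h2 this

lemma vitali_weak (G : ℤ → ℝ) (hG : ∀ j, 0 ≤ G j) (μ : ℝ) (hμ : 0 < μ) (hf : ℤ → ℕ+)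
    (F : Finset ℤ)
    (hyp : ∀ k ∈ F, μ * (hf k : ℝ) < ∑ j ∈ Finset.Icc (k - (hf k : ℤ) + 1) k, G j) :
    μ * F.card ≤ 3 * ∑ j ∈ F.biUnion (fun k => Finset.Icc (k - (hf k : ℤ) + 1) k), G j := by
  classical
  induction F using Finset.strongInduction with
  | _ F ih =>
    rcases F.eq_empty_or_nonempty with rfl | hne
    · simp
    obtain ⟨k0, hk0F, hmax⟩ := F.exists_max_image (fun k => (hf k : ℕ)) hne
    set I : ℤ → Finset ℤ := fun k => Finset.Icc (k - (hf k : ℤ) + 1) k with hI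
    have hone : ∀ k : ℤ, (1:ℤ) ≤ (hf k : ℤ) := by
      intro k; exact_mod_cast (hf k).one_le
    have hself : ∀ k : ℤ, k ∈ I k := by
      intro k
      simp only [hI, Finset.mem_Icc]
      exact ⟨by have := hone k; omega, le_refl k⟩
    set F1 := F.filter (fun k => ¬ Disjoint (I k) (I k0)) with hF1
    set F2 := F.filter (fun k => Disjoint (I k) (I k0)) with hF2
    -- basic positivity of the RHS pieces
    have hsumnn : ∀ s : Finset ℤ, 0 ≤ ∑ j ∈ s, G j :=
      fun s => Finset.sum_nonneg (fun j _ => hG j)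
    -- F1 is contained in a short interval
    have hF1sub : F1 ⊆ Finset.Icc (k0 - (hf k0 : ℤ) + 1) (k0 + (hf k0 : ℤ) - 1) := by
      intro k hk
      rw [hF1, Finset.mem_filter] at hk
      obtain ⟨hkF, hnd⟩ := hk
      obtain ⟨x, hx1, hx2⟩ := Finset.not_disjoint_iff.mp hnd
      simp only [hI, Finset.mem_Icc] at hx1 hx2
      have hle : (hf k : ℤ) ≤ (hf k0 : ℤ) := by exact_mod_cast hmax k hkF
      rw [Finset.mem_Icc]
      omega
    have hcard1 : (F1.card : ℝ) ≤ 2 * (hf k0 : ℝ) := by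
      have h1 : F1.card ≤ (Finset.Icc (k0 - (hf k0 : ℤ) + 1) (k0 + (hf k0 : ℤ) - 1)).card :=
        Finset.card_le_card hF1sub
      have h2 : ((Finset.Icc (k0 - (hf k0 : ℤ) + 1) (k0 + (hf k0 : ℤ) - 1)).card : ℤ)
          = 2 * (hf k0 : ℤ) - 1 := by
        rw [Int.card_Icc]
        have := hone k0
        omega
      have h3 : (F1.card : ℤ) ≤ 2 * (hf k0 : ℤ) - 1 := by
        rw [← h2]; exact_mod_cast h1
      have h4 : (F1.card : ℝ) ≤ 2 * (hf k0 : ℝ) - 1 := by exact_mod_cast h3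
      linarith
    -- induction on F2
    have hk0nF2 : k0 ∉ F2 := by
      rw [hF2, Finset.mem_filter]
      rintro ⟨-, hd⟩
      have : I k0 = ∅ := by simpa [disjoint_self] using hd
      exact (Finset.nonempty_iff_ne_empty.mp ⟨k0, hself k0⟩) this
    have hF2ss : F2 ⊂ F :=
      Finset.ssubset_iff_of_subset (Finset.filter_subset _ _) |>.mpr ⟨k0, hk0F, hk0nF2⟩
    have h2 : μ * F2.card ≤ 3 * ∑ j ∈ F2.biUnion I, G j :=
      ih F2 hF2ss (fun k hk => hyp k (Finset.filter_subset _ _ hk))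
    -- combine
    have hcards : F1.card + F2.card = F.card := by
      rw [hF1, hF2]
      have := Finset.card_filter_add_card_filter_not
        (s := F) (p := fun k => Disjoint (I k) (I k0))
      omega
    have hdisj : Disjoint (I k0) (F2.biUnion I) := by
      rw [Finset.disjoint_biUnion_right]
      intro k hk
      rw [hF2, Finset.mem_filter] at hk
      exact hk.2.symm
    have hsub : I k0 ∪ F2.biUnion I ⊆ F.biUnion I := by
      apply Finset.union_subset
      · exact Finset.subset_biUnion_of_mem I hk0F
      · exact Finset.biUnion_subset_biUnion_of_subset_left I (Finset.filter_subset _ _)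
    have hstep : μ * F1.card ≤ 3 * ∑ j ∈ I k0, G j := by
      have := hyp k0 hk0F
      have h5 : μ * F1.card ≤ μ * (2 * (hf k0 : ℝ)) :=
        mul_le_mul_of_nonneg_left hcard1 (le_of_lt hμ)
      have h6 : μ * (2 * (hf k0 : ℝ)) = 2 * (μ * (hf k0 : ℝ)) := by ring
      have h7 : (0:ℝ) ≤ ∑ j ∈ I k0, G j := hsumnn _
      nlinarith
    calc μ * F.card = μ * F1.card + μ * F2.card := by
          rw [← hcards]; push_cast; ring
      _ ≤ 3 * ∑ j ∈ I k0, G j + 3 * ∑ j ∈ F2.biUnion I, G j := add_le_add hstep h2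
      _ = 3 * ∑ j ∈ I k0 ∪ F2.biUnion I, G j := by
          rw [Finset.sum_union hdisj]; ring
      _ ≤ 3 * ∑ j ∈ F.biUnion I, G j := by
          have := Finset.sum_le_sum_of_subset_of_nonneg hsub (fun j _ _ => hG j)
          linarith

/-- Discrete one-sided Hardy–Littlewood maximal inequality in `ℓ^p`. -/
theorem stmt_3 (p : ℝ) (hp : 1 < p) :
    ∃ C : ℝ, 0 < C ∧
      ∀ L : ℤ → ℝ, (∀ j, 0 ≤ L j) → (∀ j < (0:ℤ), L j = 0) →
        Summable (fun j : ℤ => L j ^ p) →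
        ∑' k : ℕ, (⨆ h : ℕ+, ((h : ℝ)⁻¹ * ∑ j ∈ Finset.Icc ((k : ℤ) - (h : ℤ) + 1) (k : ℤ), L j) ^ p)
          ≤ C * ∑' j : ℤ, L j ^ p := by
  classical
  have hp0 : (0:ℝ) < p := by linarith
  have hp1 : (0:ℝ) < p - 1 := by linarith
  set a : ℝ := (2:ℝ) ^ (p - 1) with ha_def
  have ha1 : 1 < a := Real.one_lt_rpow_iff_of_pos (by norm_num) |>.mpr (Or.inl ⟨by norm_num, hp1⟩)
  have ha0 : 0 < a := lt_trans one_pos ha1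
  have hainv : (0:ℝ) < (1 - a⁻¹)⁻¹ := by
    have : a⁻¹ < 1 := inv_lt_one_of_one_lt₀ ha1
    have : 0 < 1 - a⁻¹ := by linarith
    positivity
  set C : ℝ := 3 * (2:ℝ) ^ (p + 1) * (a * (1 - a⁻¹)⁻¹) with hC_def
  have hCpos : 0 < C := by
    have h2 : (0:ℝ) < (2:ℝ) ^ (p + 1) := Real.rpow_pos_of_pos (by norm_num) _
    positivity
  refine ⟨C, hCpos, ?_⟩
  intro L hL hL0 hsum
  set T : ℝ := ∑' j : ℤ, L j ^ p with hT_def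
  have hTnn : 0 ≤ T := tsum_nonneg (fun j => Real.rpow_nonneg (hL j) p)
  -- the average
  set A : ℕ → ℕ → ℝ := fun k h => ((h : ℝ))⁻¹ * ∑ j ∈ Finset.Icc ((k:ℤ) - (h:ℤ) + 1) (k:ℤ), L j
    with hA_def
  have hAnn : ∀ k h, 0 ≤ A k h := by
    intro k h
    apply mul_nonneg (by positivity)
    exact Finset.sum_nonneg (fun j _ => hL j)
  -- the maximal function
  have hne : ∀ k : ℕ, (Finset.Icc 1 (k+1)).Nonempty := fun k => ⟨1, by simp⟩
  set M : ℕ → ℝ := fun k => (Finset.Icc 1 (k+1)).sup' (hne k) (fun h => A k h) with hM_def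
  have hMnn : ∀ k, 0 ≤ M k := by
    intro k
    have : A k 1 ≤ M k := Finset.le_sup' _ (by simp : 1 ∈ Finset.Icc 1 (k+1))
    linarith [hAnn k 1]
  -- Step A : each term of the ciSup is at most (M k)^p
  have hsup_le : ∀ k : ℕ,
      (⨆ h : ℕ+, ((h : ℝ)⁻¹ * ∑ j ∈ Finset.Icc ((k : ℤ) - (h : ℤ) + 1) (k : ℤ), L j) ^ p)
        ≤ (M k) ^ p := by
    intro k
    apply ciSup_le
    intro h
    have hterm : ((h : ℝ)⁻¹ * ∑ j ∈ Finset.Icc ((k : ℤ) - (h : ℤ) + 1) (k : ℤ), L j) = A k (h : ℕ) := by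
      simp only [hA_def]
    rw [hterm]
    apply Real.rpow_le_rpow (hAnn k _) _ (le_of_lt hp0)
    -- A k h ≤ M k for every h : ℕ+
    by_cases hc : (h : ℕ) ≤ k + 1
    · exact Finset.le_sup' _ (Finset.mem_Icc.mpr ⟨h.property, hc⟩)
    · push_neg at hc
      -- window sticks out below 0
      have hsum_eq : ∑ j ∈ Finset.Icc ((k:ℤ) - ((h:ℕ):ℤ) + 1) (k:ℤ), L j
          = ∑ j ∈ Finset.Icc ((k:ℤ) - ((k+1:ℕ):ℤ) + 1) (k:ℤ), L j := by
        have hsub : Finset.Icc ((k:ℤ) - ((k+1:ℕ):ℤ) + 1) (k:ℤ)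
            ⊆ Finset.Icc ((k:ℤ) - ((h:ℕ):ℤ) + 1) (k:ℤ) := by
          apply Finset.Icc_subset_Icc _ le_rfl
          push_cast
          omega
        rw [Finset.sum_subset hsub]
        intro x hx hxn
        apply hL0
        rw [Finset.mem_Icc] at hx hxn
        push_cast at hx hxn ⊢
        omega
      have hAk : A k (h:ℕ) ≤ A k (k+1) := by
        simp only [hA_def]
        rw [hsum_eq]
        apply mul_le_mul_of_nonneg_right _ (Finset.sum_nonneg (fun j _ => hL j))
        apply inv_anti₀ (by positivity)
        exact_mod_cast le_of_lt hc
      exact le_trans hAk (Finset.le_sup' _ (Finset.mem_Icc.mpr ⟨by omega, le_rfl⟩))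
  -- Main finite-set estimate
  have hmain : ∀ F : Finset ℕ, ∑ k ∈ F, (M k) ^ p ≤ C * T := by
    intro F
    set Fp := F.filter (fun k => 0 < M k) with hFp_def
    have hsplit : ∑ k ∈ F, (M k) ^ p ≤ ∑ k ∈ Fp, (M k) ^ p := by
      rw [← Finset.sum_filter_add_sum_filter_not F (fun k => 0 < M k) (fun k => (M k)^p)]
      have hz : ∑ k ∈ F.filter (fun k => ¬ 0 < M k), (M k) ^ p = 0 := by
        apply Finset.sum_eq_zero
        intro k hk
        rw [Finset.mem_filter] at hk
        have : M k = 0 := le_antisymm (by linarith [hk.2, (hMnn k).lt_or_eq.resolve_left hk.2]) (hMnn k)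
        rw [this, Real.zero_rpow (ne_of_gt hp0)]
      rw [hz, add_zero]
    -- the level index
    set ν : ℕ → ℤ := fun k => ⌈Real.logb 2 (M k)⌉ - 1 with hν_def
    have hν1 : ∀ k, 0 < M k → (2:ℝ) ^ ((ν k : ℝ)) < M k := by
      intro k hk
      rw [← Real.lt_logb_iff_rpow_lt (by norm_num) hk]
      have := Int.ceil_lt_add_one (Real.logb 2 (M k))
      push_cast [hν_def]
      linarith
    have hν2 : ∀ k, 0 < M k → M k ≤ (2:ℝ) ^ ((ν k : ℝ) + 1) := by
      intro k hk
      rw [← Real.logb_le_iff_le_rpow (by norm_num) hk]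
      have := Int.le_ceil (Real.logb 2 (M k))
      push_cast [hν_def]
      linarith
    set g : ℤ → ℝ := fun n : ℤ => (2:ℝ) ^ (((n:ℝ) + 1) * p) with hg_def
    have hgnn : ∀ n, 0 ≤ g n := fun n => le_of_lt (Real.rpow_pos_of_pos (by norm_num) _)
    have h1 : ∑ k ∈ Fp, (M k) ^ p ≤ ∑ k ∈ Fp, g (ν k) := by
      apply Finset.sum_le_sum
      intro k hk
      rw [Finset.mem_filter] at hk
      have hb := hν2 k hk.2
      calc (M k) ^ p ≤ ((2:ℝ) ^ ((ν k : ℝ) + 1)) ^ p :=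
            Real.rpow_le_rpow (hMnn k) hb (le_of_lt hp0)
        _ = g (ν k) := by rw [hg_def, ← Real.rpow_mul (by norm_num)]
    set 𝒩 := Fp.image ν with h𝒩_def
    have hfib : ∑ k ∈ Fp, g (ν k)
        = ∑ n ∈ 𝒩, ∑ k ∈ Fp.filter (fun k => ν k = n), g (ν k) :=
      (Finset.sum_fiberwise_of_maps_to (fun k hk => Finset.mem_image_of_mem ν hk) _).symm
    -- truncated functions
    set G : ℤ → ℤ → ℝ := fun (n j : ℤ) => if (2:ℝ) ^ ((n:ℝ) - 1) < L j then L j else 0 with hG_def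
    have hGnn : ∀ n j, 0 ≤ G n j := by
      intro n j
      rw [hG_def]
      dsimp only
      split <;> [exact hL j; exact le_rfl]
    have hGle : ∀ (n j : ℤ), L j - (2:ℝ) ^ ((n:ℝ) - 1) ≤ G n j := by
      intro n j
      rw [hG_def]
      dsimp only
      split
      · linarith [le_of_lt (Real.rpow_pos_of_pos (show (0:ℝ) < 2 by norm_num) ((n:ℝ) - 1))]
      · next h =>
          push_neg at h
          linarith
    -- level sets
    set E : ℤ → Finset ℕ := fun n : ℤ => Fp.filter (fun k => (2:ℝ) ^ ((n:ℝ)) < M k) with hE_def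
    -- window selection for elements of E n
    have hsel : ∀ n : ℤ, ∀ k ∈ E n, ∃ h : ℕ+,
        (2:ℝ) ^ ((n:ℝ) - 1) * (h : ℝ) < ∑ j ∈ Finset.Icc ((k:ℤ) - (h:ℤ) + 1) (k:ℤ), G n j := by
      intro n k hk
      rw [hE_def, Finset.mem_filter] at hk
      obtain ⟨hkF, hMk⟩ := hk
      obtain ⟨h0, hh0mem, hh0⟩ := Finset.exists_mem_eq_sup' (hne k) (fun h => A k h)
      rw [Finset.mem_Icc] at hh0mem
      have hh0pos : 0 < h0 := hh0mem.1
      refine ⟨⟨h0, hh0pos⟩, ?_⟩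
      have hW : (Finset.Icc ((k:ℤ) - (h0:ℤ) + 1) (k:ℤ)).card = h0 := by
        rw [Int.card_Icc]
        omega
      have hMk' : (2:ℝ) ^ ((n:ℝ)) < A k h0 := by
        rw [← hh0]
        rw [hM_def] at hMk
        exact hMk
      have hAval : (2:ℝ) ^ ((n:ℝ)) < ((h0:ℝ))⁻¹ * ∑ j ∈ Finset.Icc ((k:ℤ) - (h0:ℤ) + 1) (k:ℤ), L j := by
        rw [hA_def] at hMk'
        exact hMk'
      have hh0R : (0:ℝ) < (h0:ℝ) := by exact_mod_cast hh0pos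
      have hsumL : (2:ℝ) ^ ((n:ℝ)) * (h0:ℝ) < ∑ j ∈ Finset.Icc ((k:ℤ) - (h0:ℤ) + 1) (k:ℤ), L j := by
        rw [lt_inv_mul_iff₀' hh0R] at hAval
        linarith
      have hGsum : ∑ j ∈ Finset.Icc ((k:ℤ) - (h0:ℤ) + 1) (k:ℤ), L j
          - (h0:ℝ) * (2:ℝ) ^ ((n:ℝ) - 1)
          ≤ ∑ j ∈ Finset.Icc ((k:ℤ) - (h0:ℤ) + 1) (k:ℤ), G n j := by
        have := Finset.sum_le_sum (s := Finset.Icc ((k:ℤ) - (h0:ℤ) + 1) (k:ℤ))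
          (fun j _ => hGle n j)
        rw [Finset.sum_sub_distrib, Finset.sum_const, hW, nsmul_eq_mul] at this
        push_cast at this ⊢
        linarith
      have h2n : (2:ℝ) ^ ((n:ℝ)) = 2 * (2:ℝ) ^ ((n:ℝ) - 1) := by
        rw [show (n:ℝ) = ((n:ℝ) - 1) + 1 by ring, Real.rpow_add_one (by norm_num)]
        ring
      rw [h2n] at hsumL
      show (2:ℝ) ^ ((n:ℝ) - 1) * ((h0:ℕ):ℝ) < ∑ j ∈ Finset.Icc ((k:ℤ) - (h0:ℤ) + 1) (k:ℤ), G n j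
      nlinarith [hGsum, hsumL]
    -- weak type bound via Vitali
    have hweak : ∀ n : ℤ, ∃ U : Finset ℤ,
        (2:ℝ) ^ ((n:ℝ) - 1) * ((E n).card : ℝ) ≤ 3 * ∑ j ∈ U, G n j := by
      intro n
      set μ : ℝ := (2:ℝ) ^ ((n:ℝ) - 1) with hμ_def
      have hμpos : 0 < μ := Real.rpow_pos_of_pos (by norm_num) _
      set hfun : ℤ → ℕ+ := fun k' =>
        if hc : ∃ h : ℕ+, μ * (h : ℝ) < ∑ j ∈ Finset.Icc (k' - (h:ℤ) + 1) k', G n j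
        then hc.choose else 1 with hfun_def
      set F' : Finset ℤ := (E n).image (fun k : ℕ => (k : ℤ)) with hF'_def
      have hyp : ∀ k' ∈ F', μ * ((hfun k' : ℕ) : ℝ)
          < ∑ j ∈ Finset.Icc (k' - (hfun k' : ℤ) + 1) k', G n j := by
        intro k' hk'
        rw [hF'_def, Finset.mem_image] at hk'
        obtain ⟨k, hk, rfl⟩ := hk'
        have hex : ∃ h : ℕ+, μ * (h : ℝ)
            < ∑ j ∈ Finset.Icc ((k:ℤ) - (h:ℤ) + 1) (k:ℤ), G n j := hsel n k hk
        rw [hfun_def]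
        dsimp only
        rw [dif_pos hex]
        exact hex.choose_spec
      have hv := vitali_weak (G n) (hGnn n) μ hμpos hfun F' hyp
      refine ⟨F'.biUnion (fun k => Finset.Icc (k - (hfun k : ℤ) + 1) k), ?_⟩
      have hcard : (F'.card : ℝ) = ((E n).card : ℝ) := by
        rw [hF'_def, Finset.card_image_of_injective _ (fun x y h => by exact_mod_cast h)]
      rw [← hcard]
      exact hv
    choose U hU using hweak
    set V : Finset ℤ := 𝒩.biUnion U with hV_def
    -- per-n estimate
    have h2 : ∀ n ∈ 𝒩, ∑ k ∈ Fp.filter (fun k => ν k = n), g (ν k)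
        ≤ 3 * (2:ℝ) ^ (p + 1) * ∑ j ∈ V, (2:ℝ) ^ ((p-1) * (n:ℝ)) * G n j := by
      intro n hn
      have hfibcard : ∑ k ∈ Fp.filter (fun k => ν k = n), g (ν k)
          = ((Fp.filter (fun k => ν k = n)).card : ℝ) * g n := by
        calc ∑ k ∈ Fp.filter (fun k => ν k = n), g (ν k)
            = ∑ k ∈ Fp.filter (fun k => ν k = n), g n :=
              Finset.sum_congr rfl (fun k hk => by rw [(Finset.mem_filter.mp hk).2])
          _ = _ := by rw [Finset.sum_const, nsmul_eq_mul]
      rw [hfibcard]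
      have hsubE : Fp.filter (fun k => ν k = n) ⊆ E n := by
        intro k hk
        rw [Finset.mem_filter] at hk
        rw [hE_def, Finset.mem_filter]
        refine ⟨hk.1, ?_⟩
        have hk2 : 0 < M k := (Finset.mem_filter.mp hk.1).2
        have := hν1 k hk2
        rw [hk.2] at this
        exact this
      have hcardle : ((Fp.filter (fun k => ν k = n)).card : ℝ) ≤ ((E n).card : ℝ) := by
        exact_mod_cast Finset.card_le_card hsubE
      have hUV : ∑ j ∈ U n, G n j ≤ ∑ j ∈ V, G n j := by
        apply Finset.sum_le_sum_of_subset_of_nonneg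
        · rw [hV_def]; exact Finset.subset_biUnion_of_mem U hn
        · intro j _ _; exact hGnn n j
      have hEcard : ((E n).card : ℝ) ≤ (2:ℝ) ^ (1 - (n:ℝ)) * (3 * ∑ j ∈ V, G n j) := by
        have h0 := hU n
        have hμpos : (0:ℝ) < (2:ℝ) ^ ((n:ℝ) - 1) := Real.rpow_pos_of_pos (by norm_num) _
        have hh : (2:ℝ) ^ (1 - (n:ℝ)) * ((2:ℝ) ^ ((n:ℝ) - 1)) = 1 := by
          rw [← Real.rpow_add (by norm_num)]
          norm_num
        have h3 : (2:ℝ) ^ ((n:ℝ) - 1) * ((E n).card : ℝ) ≤ 3 * ∑ j ∈ V, G n j :=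
          le_trans h0 (by linarith [hUV])
        calc ((E n).card : ℝ)
            = (2:ℝ) ^ (1 - (n:ℝ)) * ((2:ℝ) ^ ((n:ℝ) - 1) * ((E n).card : ℝ)) := by
              rw [← mul_assoc, hh, one_mul]
          _ ≤ (2:ℝ) ^ (1 - (n:ℝ)) * (3 * ∑ j ∈ V, G n j) := by
              apply mul_le_mul_of_nonneg_left h3 (le_of_lt (Real.rpow_pos_of_pos (by norm_num) _))
      have hpow : g n * (2:ℝ) ^ (1 - (n:ℝ)) = (2:ℝ) ^ (p+1) * (2:ℝ) ^ ((p-1) * (n:ℝ)) := by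
        rw [hg_def]
        dsimp only
        rw [← Real.rpow_add (show (0:ℝ) < 2 by norm_num),
            ← Real.rpow_add (show (0:ℝ) < 2 by norm_num)]
        congr 1
        ring
      calc ((Fp.filter (fun k => ν k = n)).card : ℝ) * g n
          ≤ ((2:ℝ) ^ (1 - (n:ℝ)) * (3 * ∑ j ∈ V, G n j)) * g n := by
            apply mul_le_mul_of_nonneg_right _ (hgnn n)
            exact le_trans hcardle hEcard
        _ = 3 * (2:ℝ) ^ (p + 1) * ∑ j ∈ V, (2:ℝ) ^ ((p-1) * (n:ℝ)) * G n j := by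
            simp only [Finset.mul_sum, Finset.sum_mul]
            refine Finset.sum_congr rfl (fun j _ => ?_)
            linear_combination (3 * G n j) * hpow
    -- per-j geometric estimate
    have h3 : ∀ j : ℤ, ∑ n ∈ 𝒩, (2:ℝ) ^ ((p-1) * (n:ℝ)) * G n j
        ≤ a * (1 - a⁻¹)⁻¹ * L j ^ p := by
      intro j
      have hrw : ∑ n ∈ 𝒩, (2:ℝ) ^ ((p-1) * (n:ℝ)) * G n j
          = ∑ n ∈ 𝒩.filter (fun n : ℤ => (2:ℝ) ^ ((n:ℝ) - 1) < L j), (2:ℝ) ^ ((p-1) * (n:ℝ)) * L j := by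
        rw [Finset.sum_filter]
        refine Finset.sum_congr rfl (fun n _ => ?_)
        rw [hG_def]
        by_cases hc : (2:ℝ) ^ ((n:ℝ) - 1) < L j
        · simp [hc]
        · simp [hc]
      rw [hrw]
      set S := 𝒩.filter (fun n : ℤ => (2:ℝ) ^ ((n:ℝ) - 1) < L j) with hS_def
      rcases S.eq_empty_or_nonempty with hSe | hSne
      · rw [hSe]
        simp only [Finset.sum_empty]
        exact mul_nonneg (mul_nonneg (le_of_lt ha0) (le_of_lt hainv)) (Real.rpow_nonneg (hL j) p)
      · have hLj : 0 < L j := by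
          obtain ⟨n, hn⟩ := hSne
          rw [hS_def, Finset.mem_filter] at hn
          exact lt_trans (Real.rpow_pos_of_pos (by norm_num) _) hn.2
        set n0 := S.max' hSne with hn0_def
        have hn0S : n0 ∈ S := S.max'_mem hSne
        have hle : ∀ n ∈ S, n ≤ n0 := fun n hn => S.le_max' n hn
        have hzpow : ∀ n : ℤ, (2:ℝ) ^ ((p-1) * (n:ℝ)) = a ^ n := by
          intro n
          rw [ha_def, ← Real.rpow_intCast ((2:ℝ)^(p-1)) n, ← Real.rpow_mul (by norm_num)]
        have hgeo : ∑ n ∈ S, (2:ℝ) ^ ((p-1) * (n:ℝ)) ≤ a ^ n0 * (1 - a⁻¹)⁻¹ := by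
          rw [Finset.sum_congr rfl (fun n _ => hzpow n)]
          exact geom_zpow_sum_le a ha1 S n0 hle
        have hn0b : a ^ n0 ≤ (2:ℝ)^(p-1) * L j ^ (p-1) := by
          have hn0c : (2:ℝ) ^ ((n0:ℝ)) ≤ 2 * L j := by
            rw [hS_def, Finset.mem_filter] at hn0S
            have h2n : (2:ℝ) ^ ((n0:ℝ)) = 2 * (2:ℝ) ^ ((n0:ℝ) - 1) := by
              rw [show (n0:ℝ) = ((n0:ℝ) - 1) + 1 by ring, Real.rpow_add_one (by norm_num)]
              ring
            rw [h2n]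
            linarith [hn0S.2]
          have hthis := Real.rpow_le_rpow (le_of_lt (Real.rpow_pos_of_pos (by norm_num) ((n0:ℝ)))) hn0c
            (le_of_lt hp1)
          rw [Real.mul_rpow (by norm_num) (le_of_lt hLj)] at hthis
          rw [← hzpow n0, mul_comm (p-1) ((n0:ℤ):ℝ), Real.rpow_mul (by norm_num : (0:ℝ) ≤ 2)]
          exact hthis
        calc ∑ n ∈ S, (2:ℝ) ^ ((p-1) * (n:ℝ)) * L j
            = (∑ n ∈ S, (2:ℝ) ^ ((p-1) * (n:ℝ))) * L j := by rw [Finset.sum_mul]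
          _ ≤ (a ^ n0 * (1 - a⁻¹)⁻¹) * L j := mul_le_mul_of_nonneg_right hgeo (hL j)
          _ ≤ ((2:ℝ)^(p-1) * L j ^ (p-1) * (1 - a⁻¹)⁻¹) * L j := by
              apply mul_le_mul_of_nonneg_right _ (hL j)
              exact mul_le_mul_of_nonneg_right hn0b (le_of_lt hainv)
          _ = a * (1 - a⁻¹)⁻¹ * (L j ^ (p-1) * L j) := by rw [ha_def]; ring
          _ = a * (1 - a⁻¹)⁻¹ * L j ^ p := by
              rw [← Real.rpow_add_one (ne_of_gt hLj), show p - 1 + 1 = p by ring]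
    have h4 : ∑ j ∈ V, L j ^ p ≤ T := by
      rw [hT_def]
      exact Summable.sum_le_tsum V (fun j _ => Real.rpow_nonneg (hL j) p) hsum
    have h2p : (0:ℝ) < (2:ℝ) ^ (p+1) := Real.rpow_pos_of_pos (by norm_num) _
    calc ∑ k ∈ F, (M k)^p ≤ ∑ k ∈ Fp, (M k)^p := hsplit
      _ ≤ ∑ k ∈ Fp, g (ν k) := h1
      _ = ∑ n ∈ 𝒩, ∑ k ∈ Fp.filter (fun k => ν k = n), g (ν k) := hfib
      _ ≤ ∑ n ∈ 𝒩, 3 * (2:ℝ)^(p+1) * ∑ j ∈ V, (2:ℝ)^((p-1)*(n:ℝ)) * G n j :=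
          Finset.sum_le_sum h2
      _ = 3 * (2:ℝ)^(p+1) * ∑ n ∈ 𝒩, ∑ j ∈ V, (2:ℝ)^((p-1)*(n:ℝ)) * G n j := by
          rw [Finset.mul_sum]
      _ = 3 * (2:ℝ)^(p+1) * ∑ j ∈ V, ∑ n ∈ 𝒩, (2:ℝ)^((p-1)*(n:ℝ)) * G n j := by
          rw [Finset.sum_comm]
      _ ≤ 3 * (2:ℝ)^(p+1) * ∑ j ∈ V, a * (1 - a⁻¹)⁻¹ * L j ^ p := by
          apply mul_le_mul_of_nonneg_left (Finset.sum_le_sum (fun j _ => h3 j)) (by positivity)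
      _ = 3 * (2:ℝ)^(p+1) * (a * (1 - a⁻¹)⁻¹) * ∑ j ∈ V, L j ^ p := by
          rw [← Finset.mul_sum, ← mul_assoc]
      _ ≤ C * T := by
          rw [hC_def]
          apply mul_le_mul_of_nonneg_left h4
          exact mul_nonneg (mul_nonneg (by norm_num) (le_of_lt h2p))
            (mul_nonneg (le_of_lt ha0) (le_of_lt hainv))
  -- conclude
  apply tsum_le_of_sum_le' (by positivity)
  intro F
  calc ∑ k ∈ F, _ ≤ ∑ k ∈ F, (M k) ^ p := Finset.sum_le_sum (fun k _ => hsup_le k)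
    _ ≤ C * T := hmain F
end

section
/- Let K(f)(x) = (1/2)(f(x/2) + f((x+1)/2)) be the doubling-average transition operator on functions of bounded variation on [0,1]. Then for every function f of bounded variation, the total variation of K^n(f) satisfies |d K^n f| ≤ 2^{-n} |d f|, and consequently ‖K^n f − ∫₀¹ f dλ‖_∞ ≤ 2^{-n} |d f|, where λ is Lebesgue measure. -/
open MeasureTheory Set
open scoped ENNReal

private lemma evar_add_le (g h : ℝ → ℝ) (s : Set ℝ) :
    eVariationOn (fun x => g x + h x) s ≤ eVariationOn g s + eVariationOn h s := by
  apply iSup_le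
  rintro ⟨n, u, hu, us⟩
  calc ∑ i ∈ Finset.range n, edist (g (u (i+1)) + h (u (i+1))) (g (u i) + h (u i))
      ≤ ∑ i ∈ Finset.range n,
          (edist (g (u (i+1))) (g (u i)) + edist (h (u (i+1))) (h (u i))) :=
        Finset.sum_le_sum fun i _ => edist_add_add_le _ _ _ _
    _ = (∑ i ∈ Finset.range n, edist (g (u (i+1))) (g (u i))) +
        ∑ i ∈ Finset.range n, edist (h (u (i+1))) (h (u i)) := Finset.sum_add_distrib
    _ ≤ _ := add_le_add (eVariationOn.sum_le (f := g) (n := n) hu us) (eVariationOn.sum_le (f := h) (n := n) hu us)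

open scoped NNReal in
private lemma evar_half_le (g : ℝ → ℝ) (s : Set ℝ) :
    eVariationOn (fun x => g x / 2) s ≤ 2⁻¹ * eVariationOn g s := by
  have hl : LipschitzWith 2⁻¹ (fun x : ℝ => x / 2) := by
    apply LipschitzWith.of_dist_le_mul
    intro x y
    rw [Real.dist_eq, Real.dist_eq, ← sub_div, abs_div]
    push_cast
    rw [abs_two, div_eq_inv_mul]
  calc eVariationOn (fun x => g x / 2) s
      = eVariationOn ((fun x : ℝ => x / 2) ∘ g) s := rfl
    _ ≤ ((2⁻¹ : ℝ≥0) : ℝ≥0∞) * eVariationOn g s :=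
        (hl.lipschitzOnWith (s := univ)).comp_eVariationOn_le (mapsTo_univ _ _)
    _ = 2⁻¹ * eVariationOn g s := by
        rw [ENNReal.coe_inv (by norm_num : (2:ℝ≥0) ≠ 0)]
        norm_num

private lemma image_half : (fun x : ℝ => x / 2) '' Icc 0 1 = Icc 0 (1/2) := by
  ext y; simp only [mem_image, mem_Icc]
  constructor
  · rintro ⟨x, ⟨h0, h1⟩, rfl⟩; constructor <;> linarith
  · rintro ⟨h0, h1⟩; exact ⟨2*y, ⟨by linarith, by linarith⟩, by ring⟩

private lemma image_half' : (fun x : ℝ => (x + 1) / 2) '' Icc 0 1 = Icc (1/2) 1 := by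
  ext y; simp only [mem_image, mem_Icc]
  constructor
  · rintro ⟨x, ⟨h0, h1⟩, rfl⟩; constructor <;> linarith
  · rintro ⟨h0, h1⟩; exact ⟨2*y - 1, ⟨by linarith, by linarith⟩, by ring⟩

private lemma key_step (g : ℝ → ℝ) :
    eVariationOn (fun x => (g (x/2) + g ((x+1)/2)) / 2) (Icc 0 1)
      ≤ 2⁻¹ * eVariationOn g (Icc 0 1) := by
  have h1 : eVariationOn (fun x : ℝ => g (x/2)) (Icc 0 1) = eVariationOn g (Icc 0 (1/2)) := by
    have := eVariationOn.comp_eq_of_monotoneOn g (t := Icc 0 1) (fun x : ℝ => x/2)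
      (fun a _ b _ hab => by dsimp; linarith)
    rw [image_half] at this
    exact this
  have h2 : eVariationOn (fun x : ℝ => g ((x+1)/2)) (Icc 0 1)
      = eVariationOn g (Icc (1/2) 1) := by
    have := eVariationOn.comp_eq_of_monotoneOn g (t := Icc 0 1) (fun x : ℝ => (x+1)/2)
      (fun a _ b _ hab => by dsimp; linarith)
    rw [image_half'] at this
    exact this
  have hsplit : eVariationOn g (Icc 0 (1/2)) + eVariationOn g (Icc (1/2) 1)
      = eVariationOn g (Icc (0:ℝ) 1) := by
    have := eVariationOn.Icc_add_Icc g (s := univ) (a := (0:ℝ)) (b := 1/2) (c := 1)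
      (by norm_num) (by norm_num) (mem_univ _)
    simpa using this
  calc eVariationOn (fun x => (g (x/2) + g ((x+1)/2)) / 2) (Icc 0 1)
      ≤ 2⁻¹ * eVariationOn (fun x => g (x/2) + g ((x+1)/2)) (Icc 0 1) :=
        evar_half_le _ _
    _ ≤ 2⁻¹ * (eVariationOn (fun x : ℝ => g (x/2)) (Icc 0 1) +
          eVariationOn (fun x : ℝ => g ((x+1)/2)) (Icc 0 1)) :=
        mul_le_mul_right (evar_add_le _ _ _) _
    _ = 2⁻¹ * eVariationOn g (Icc 0 1) := by rw [h1, h2, hsplit]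

private lemma ii_of_bdd {h : ℝ → ℝ} (hm : Measurable h) {M : ℝ}
    (hb : ∀ y ∈ Icc (0:ℝ) 1, |h y| ≤ M) :
    IntervalIntegrable h volume 0 1 := by
  rw [intervalIntegrable_iff_integrableOn_Icc_of_le zero_le_one]
  apply Measure.integrableOn_of_bounded (M := M)
  · exact measure_Icc_lt_top.ne
  · exact hm.aestronglyMeasurable
  · filter_upwards [ae_restrict_mem measurableSet_Icc] with x hx using hb x hx

/-- For the doubling-average operator `Kg(x) = (g(x/2)+g((x+1)/2))/2`, the total variation of
`K^n f` on `[0,1]` is at most `2^{-n}` times that of `f`, and `K^n f` converges to `∫₀¹ f`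
in the sup norm at rate `2^{-n}` times the total variation of `f`. -/
theorem stmt_6 (f : ℝ → ℝ) (hf : Measurable f)
    (hbv : BoundedVariationOn f (Set.Icc 0 1))
    (K : (ℝ → ℝ) → (ℝ → ℝ))
    (hK : ∀ g x, K g x = (g (x / 2) + g ((x + 1) / 2)) / 2) (n : ℕ) :
    eVariationOn (K^[n] f) (Set.Icc 0 1) ≤ (2 : ℝ≥0∞)⁻¹ ^ n * eVariationOn f (Set.Icc 0 1) ∧
    ∀ x ∈ Set.Icc (0:ℝ) 1,
      |K^[n] f x - ∫ y in (0:ℝ)..1, f y| ≤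
        (2:ℝ)⁻¹ ^ n * (eVariationOn f (Set.Icc 0 1)).toReal := by
  have hKfun : ∀ g : ℝ → ℝ, K g = fun x => (g (x/2) + g ((x+1)/2)) / 2 :=
    fun g => funext (hK g)
  -- part 1 for all m
  have var_iter : ∀ m : ℕ, eVariationOn (K^[m] f) (Icc 0 1)
      ≤ (2 : ℝ≥0∞)⁻¹ ^ m * eVariationOn f (Icc 0 1) := by
    intro m
    induction m with
    | zero => simp
    | succ m ih =>
      rw [Function.iterate_succ_apply', hKfun]
      calc eVariationOn (fun x => ((K^[m] f) (x/2) + (K^[m] f) ((x+1)/2)) / 2) (Icc 0 1)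
          ≤ 2⁻¹ * eVariationOn (K^[m] f) (Icc 0 1) := key_step _
        _ ≤ 2⁻¹ * ((2 : ℝ≥0∞)⁻¹ ^ m * eVariationOn f (Icc 0 1)) := mul_le_mul_right ih _
        _ = (2 : ℝ≥0∞)⁻¹ ^ (m+1) * eVariationOn f (Icc 0 1) := by
            rw [pow_succ]; ring
  have hrhs_ne_top : ∀ m : ℕ, (2 : ℝ≥0∞)⁻¹ ^ m * eVariationOn f (Icc 0 1) ≠ ⊤ :=
    fun m => ENNReal.mul_ne_top (ENNReal.pow_ne_top (by simp)) hbv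
  have bv_iter : ∀ m : ℕ, BoundedVariationOn (K^[m] f) (Icc 0 1) :=
    fun m => ne_top_of_le_ne_top (hrhs_ne_top m) (var_iter m)
  have meas : ∀ m : ℕ, Measurable (K^[m] f) := by
    intro m
    induction m with
    | zero => exact hf
    | succ m ih =>
      rw [Function.iterate_succ_apply', hKfun]
      exact ((ih.comp (measurable_id.div_const 2)).add
        (ih.comp ((measurable_id.add_const 1).div_const 2))).div_const 2
  have bdd : ∀ m : ℕ, ∀ y ∈ Icc (0:ℝ) 1, |K^[m] f y| ≤
      |K^[m] f 0| + (eVariationOn (K^[m] f) (Icc 0 1)).toReal := by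
    intro m y hy
    have hd := (bv_iter m).dist_le hy (⟨le_rfl, zero_le_one⟩ : (0:ℝ) ∈ Icc 0 1)
    rw [Real.dist_eq] at hd
    calc |K^[m] f y| = |K^[m] f 0 + (K^[m] f y - K^[m] f 0)| := by ring_nf
      _ ≤ |K^[m] f 0| + |K^[m] f y - K^[m] f 0| := abs_add_le _ _
      _ ≤ _ := by linarith
  have intg : ∀ m : ℕ, IntervalIntegrable (K^[m] f) volume 0 1 :=
    fun m => ii_of_bdd (meas m) (bdd m)
  -- integral invariance
  have int_inv : ∀ m : ℕ, (∫ y in (0:ℝ)..1, K^[m] f y) = ∫ y in (0:ℝ)..1, f y := by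
    intro m
    induction m with
    | zero => rfl
    | succ m ih =>
      rw [Function.iterate_succ_apply', ← ih, hKfun]
      set g := K^[m] f with hg
      have hmem : ∀ y ∈ Icc (0:ℝ) 1, y/2 ∈ Icc (0:ℝ) 1 := by
        rintro y ⟨h0, h1⟩; constructor <;> [linarith; linarith]
      have hmem' : ∀ y ∈ Icc (0:ℝ) 1, (y+1)/2 ∈ Icc (0:ℝ) 1 := by
        rintro y ⟨h0, h1⟩; constructor <;> [linarith; linarith]
      have hi1 : IntervalIntegrable (fun y => g (y/2)) volume 0 1 :=
        ii_of_bdd ((meas m).comp (measurable_id.div_const 2))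
          (fun y hy => bdd m _ (hmem y hy))
      have hi2 : IntervalIntegrable (fun y => g ((y+1)/2)) volume 0 1 :=
        ii_of_bdd ((meas m).comp ((measurable_id.add_const 1).div_const 2))
          (fun y hy => bdd m _ (hmem' y hy))
      have e1 : (∫ y in (0:ℝ)..1, g (y/2)) = 2 * ∫ y in (0:ℝ)..(1/2), g y := by
        rw [intervalIntegral.integral_comp_div g two_ne_zero]
        norm_num [smul_eq_mul]
      have e2 : (∫ y in (0:ℝ)..1, g ((y+1)/2)) = 2 * ∫ y in (1/2:ℝ)..1, g y := by
        have hrw : ∀ y : ℝ, (y+1)/2 = y/2 + 1/2 := fun y => by ring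
        simp_rw [hrw]
        rw [intervalIntegral.integral_comp_div_add g two_ne_zero (1/2)]
        norm_num [smul_eq_mul]
      have hg1 : IntervalIntegrable g volume 0 (1/2) :=
        (intg m).mono_set (by
          rw [uIcc_of_le (by norm_num : (0:ℝ) ≤ 1/2), uIcc_of_le zero_le_one]
          exact Icc_subset_Icc le_rfl (by norm_num))
      have hg2 : IntervalIntegrable g volume (1/2) 1 :=
        (intg m).mono_set (by
          rw [uIcc_of_le (by norm_num : (1/2:ℝ) ≤ 1), uIcc_of_le zero_le_one]
          exact Icc_subset_Icc (by norm_num) le_rfl)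
      calc (∫ y in (0:ℝ)..1, (g (y/2) + g ((y+1)/2)) / 2)
          = ((∫ y in (0:ℝ)..1, g (y/2)) + ∫ y in (0:ℝ)..1, g ((y+1)/2)) / 2 := by
            rw [intervalIntegral.integral_div, intervalIntegral.integral_add hi1 hi2]
        _ = (∫ y in (0:ℝ)..(1/2), g y) + ∫ y in (1/2:ℝ)..1, g y := by
            rw [e1, e2]; ring
        _ = ∫ y in (0:ℝ)..1, g y :=
            intervalIntegral.integral_add_adjacent_intervals hg1 hg2
  refine ⟨var_iter n, ?_⟩
  intro x hx
  set g := K^[n] f with hg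
  set V : ℝ := (eVariationOn g (Icc (0:ℝ) 1)).toReal with hV
  have hVle : V ≤ (2:ℝ)⁻¹ ^ n * (eVariationOn f (Icc 0 1)).toReal := by
    have := ENNReal.toReal_mono (hrhs_ne_top n) (var_iter n)
    rwa [ENNReal.toReal_mul, ENNReal.toReal_pow, ENNReal.toReal_inv,
      ENNReal.toReal_ofNat] at this
  have h1 : g x - ∫ y in (0:ℝ)..1, g y = ∫ y in (0:ℝ)..1, (g x - g y) := by
    rw [intervalIntegral.integral_sub intervalIntegrable_const (intg n)]
    simp [hg]
  have h2 : |∫ y in (0:ℝ)..1, (g x - g y)| ≤ ∫ y in (0:ℝ)..1, |g x - g y| :=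
    intervalIntegral.abs_integral_le_integral_abs zero_le_one
  have h3 : (∫ y in (0:ℝ)..1, |g x - g y|) ≤ ∫ _y in (0:ℝ)..1, V := by
    apply intervalIntegral.integral_mono_on zero_le_one
      (intervalIntegrable_const.sub (intg n)).abs intervalIntegrable_const
    intro y hy
    rw [← Real.dist_eq]
    exact (bv_iter n).dist_le hx hy
  have h4 : (∫ _y in (0:ℝ)..1, V) = V := by simp
  calc |g x - ∫ y in (0:ℝ)..1, f y|
      = |g x - ∫ y in (0:ℝ)..1, g y| := by rw [int_inv n]
    _ = |∫ y in (0:ℝ)..1, (g x - g y)| := by rw [h1]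
    _ ≤ V := by rw [← h4]; exact h2.trans h3
    _ ≤ (2:ℝ)⁻¹ ^ n * (eVariationOn f (Icc 0 1)).toReal := hVle
end

section
/- Consider the Markov chain on ℕ with transition probabilities p_{0,n} = 1/(ζ(p+1) n^{p+1}) for n ≥ 1 and p_{n,n−1} = 1 for n ≥ 1, where p > 1. Then the measure π defined by π{n} = ∑_{i≥n} d/i^{p+1} for n ≥ 1 and π{0} = π{1}, with d = 1/ζ(p+1) normalized so that π is a probability measure, is an invariant probability measure for this chain. -/
open Real

/-- The renewal-type Markov chain on ℕ jumping from 0 to n with probability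
`1/(ζ(p+1) n^{p+1})` and from n to n−1 with probability 1 has invariant probability measure
`π{n} = ∑_{i≥n} d/i^{p+1}` (n ≥ 1), `π{0} = π{1}`. -/
theorem stmt_7 (p : ℝ) (hp : 1 < p) (Z d : ℝ)
    (hZ : Z = ∑' n : ℕ, ((n : ℝ) + 1) ^ (-(p + 1)))
    (K : ℕ → ℕ → ℝ)
    (hK0 : ∀ n : ℕ, K 0 n = if 1 ≤ n then 1 / (Z * (n : ℝ) ^ (p + 1)) else 0)
    (hK : ∀ m n : ℕ, 1 ≤ m → K m n = if n + 1 = m then 1 else 0)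
    (pi : ℕ → ℝ)
    (hpin : ∀ n : ℕ, 1 ≤ n → pi n = ∑' i : ℕ, d * (((n + i : ℕ) : ℝ)) ^ (-(p + 1)))
    (hpi0 : pi 0 = pi 1)
    (hd : 0 < d) (hnorm : ∑' n : ℕ, pi n = 1) :
    ∀ n : ℕ, ∑' m : ℕ, pi m * K m n = pi n := by
  have hq : -(p + 1) < -1 := by linarith
  have hsum0 : Summable (fun i : ℕ => (i : ℝ) ^ (-(p + 1))) :=
    Real.summable_nat_rpow.mpr hq
  have hshift : ∀ k : ℕ, Summable (fun i : ℕ => (((k + i : ℕ)) : ℝ) ^ (-(p + 1))) := by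
    intro k
    exact hsum0.comp_injective (add_right_injective k)
  have hZsum : Summable (fun i : ℕ => ((i : ℝ) + 1) ^ (-(p + 1))) := by
    refine (hshift 1).congr (fun i => ?_)
    push_cast
    rw [add_comm]
  have hZpos : 0 < Z := by
    rw [hZ]
    refine Summable.tsum_pos hZsum (fun i => Real.rpow_nonneg (by positivity) _) 0 ?_
    positivity
  have hpi1 : pi 1 = d * Z := by
    rw [hpin 1 le_rfl, tsum_mul_left, hZ]
    congr 1
    refine tsum_congr (fun i => ?_)
    congr 1
    push_cast
    ring
  have hstep : ∀ m : ℕ, 1 ≤ m → pi m = d * (m : ℝ) ^ (-(p + 1)) + pi (m + 1) := by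
    intro m hm
    rw [hpin m hm, hpin (m + 1) (by omega)]
    have hs : Summable (fun i : ℕ => d * (((m + i : ℕ)) : ℝ) ^ (-(p + 1))) :=
      (hshift m).mul_left d
    rw [Summable.tsum_eq_zero_add hs]
    simp only [Nat.add_zero]
    congr 1
    refine tsum_congr (fun i => ?_)
    have h2 : m + (i + 1) = m + 1 + i := by omega
    rw [h2]
  intro n
  rcases Nat.eq_zero_or_pos n with hn | hn
  · subst hn
    rw [tsum_eq_single 1 ?_]
    · rw [hK 1 0 le_rfl]
      simp [hpi0]
    · intro m hm
      rcases Nat.eq_zero_or_pos m with h | h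
      · subst h
        rw [hK0 0]
        simp
      · rw [hK m 0 h, if_neg (by omega), mul_zero]
  · have hne : (0 : ℕ) ≠ n + 1 := by omega
    have h0 : ∀ m ∉ ({0, n + 1} : Finset ℕ), pi m * K m n = 0 := by
      intro m hm
      simp only [Finset.mem_insert, Finset.mem_singleton] at hm
      push_neg at hm
      rw [hK m n (by omega), if_neg (by omega), mul_zero]
    rw [tsum_eq_sum h0, Finset.sum_pair hne, hK0 n, hK (n + 1) n (by omega)]
    rw [if_pos (show 1 ≤ n by omega), if_pos rfl, mul_one, hpi0, hpi1, hstep n hn]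
    have hnpos : (0 : ℝ) < (n : ℝ) := by exact_mod_cast hn
    have hrp : (0 : ℝ) < (n : ℝ) ^ (p + 1) := Real.rpow_pos_of_pos hnpos _
    rw [Real.rpow_neg hnpos.le]
    field_simp
end

section
/- Consider the Markov kernel on [0,1] given by K(x, A) = (1−x) δ_x(A) + x ν(A), where ν has density (1+a) y^a with a > 0. Then the probability measure π with density a y^{a−1} on [0,1] is invariant for K. -/
open MeasureTheory Real

/-- The probability measure with density `a y^{a−1}` on `[0,1]` is invariant for the kernel
`K(x,·) = (1−x) δ_x + x ν`, where `ν` has density `(1+a) y^a` on `[0,1]`. -/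
theorem stmt_13 (a : ℝ) (ha : 0 < a)
    (ν pi : Measure ℝ)
    (hν : ν = (volume.restrict (Set.Icc (0:ℝ) 1)).withDensity
        (fun y => ENNReal.ofReal ((1 + a) * y ^ a)))
    (hpi : pi = (volume.restrict (Set.Icc (0:ℝ) 1)).withDensity
        (fun y => ENNReal.ofReal (a * y ^ (a - 1))))
    (K : ℝ → Measure ℝ)
    (hK : ∀ x, K x = ENNReal.ofReal (1 - x) • Measure.dirac x + ENNReal.ofReal x • ν) :
    ∀ A : Set ℝ, MeasurableSet A → ∫⁻ x, K x A ∂pi = pi A := by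
  intro A hA
  set μ := volume.restrict (Set.Icc (0:ℝ) 1) with hμ
  have ha1 : (0:ℝ) < a + 1 := by linarith
  have hD : Measurable fun y : ℝ => ENNReal.ofReal (a * y ^ (a-1)) := by fun_prop
  have hX : Measurable fun y : ℝ => ENNReal.ofReal y := by fun_prop
  have hOneX : Measurable fun y : ℝ => ENNReal.ofReal (1 - y) := by fun_prop
  have hN : Measurable fun y : ℝ => ENNReal.ofReal ((1 + a) * y ^ a) := by fun_prop
  -- the constant ∫ x dπ = a/(a+1)
  have hc : ∫⁻ x, ENNReal.ofReal (a * x ^ (a-1)) * ENNReal.ofReal x ∂μ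
      = ENNReal.ofReal (a / (a+1)) := by
    have h1 : (fun x => ENNReal.ofReal (a * x ^ (a-1)) * ENNReal.ofReal x)
        =ᵐ[μ] fun x => ENNReal.ofReal (a * x ^ a) := by
      rw [hμ]
      filter_upwards [ae_restrict_mem measurableSet_Icc] with x hx
      rcases eq_or_ne x 0 with rfl | hx0
      · simp [Real.zero_rpow ha.ne']
      · rw [← ENNReal.ofReal_mul (mul_nonneg ha.le (Real.rpow_nonneg hx.1 _)),
          mul_assoc, ← Real.rpow_add_one hx0, sub_add_cancel]
    have hint : Integrable (fun x : ℝ => a * x ^ a) μ := by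
      rw [hμ, ← IntegrableOn, integrableOn_Icc_iff_integrableOn_Ioc]
      exact ((intervalIntegrable_iff_integrableOn_Ioc_of_le zero_le_one).mp
        (intervalIntegral.intervalIntegrable_rpow (Or.inl ha.le))).const_mul a
    have hval : ∫ x, a * x ^ a ∂μ = a / (a+1) := by
      rw [hμ, MeasureTheory.integral_Icc_eq_integral_Ioc,
        ← intervalIntegral.integral_of_le zero_le_one,
        intervalIntegral.integral_const_mul, integral_rpow (Or.inl (by linarith))]
      rw [Real.one_rpow, Real.zero_rpow (by linarith)]
      ring
    have hnn : 0 ≤ᵐ[μ] fun x : ℝ => a * x ^ a := by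
      rw [hμ]
      filter_upwards [ae_restrict_mem measurableSet_Icc] with x hx
      exact mul_nonneg ha.le (Real.rpow_nonneg hx.1 _)
    rw [lintegral_congr_ae h1, ← hval, ← ofReal_integral_eq_lintegral_ofReal hint hnn]
  -- expand the kernel and the measure pi
  simp only [hK, Measure.coe_add, Pi.add_apply, Measure.smul_apply, smul_eq_mul,
    Measure.dirac_apply' _ hA]
  rw [hpi, lintegral_withDensity_eq_lintegral_mul _ hD
    (by exact (hOneX.mul (measurable_one.indicator hA)).add (hX.mul_const _))]
  simp only [Pi.mul_apply, mul_add]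
  rw [lintegral_add_left (by exact hD.mul (hOneX.mul (measurable_one.indicator hA)))]
  -- second term: pull out ν A and fold the constant into the density of ν
  have hterm2 : ∫⁻ x, ENNReal.ofReal (a * x ^ (a-1)) * (ENNReal.ofReal x * ν A) ∂μ
      = ∫⁻ x in A, ENNReal.ofReal (a * x ^ a) ∂μ := by
    simp only [← mul_assoc]
    rw [lintegral_mul_const _ (f := fun x : ℝ => ENNReal.ofReal (a * x ^ (a-1)) * ENNReal.ofReal x) (hD.mul hX), hc, hν, withDensity_apply _ hA,
      ← lintegral_const_mul _ hN]
    refine lintegral_congr fun x => ?_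
    rcases le_or_gt 0 x with hx0 | hx0
    · rw [← ENNReal.ofReal_mul (by positivity)]
      congr 1
      field_simp
      ring
    · rw [Real.rpow_def_of_neg hx0]
      rw [← ENNReal.ofReal_mul (by positivity)]
      congr 1
      field_simp
      ring
  rw [hterm2]
  -- first term as a set integral
  have hterm1 : ∫⁻ x, ENNReal.ofReal (a * x ^ (a-1)) *
        (ENNReal.ofReal (1 - x) * A.indicator 1 x) ∂μ
      = ∫⁻ x in A, ENNReal.ofReal (a * x ^ (a-1)) * ENNReal.ofReal (1 - x) ∂μ := by
    rw [← lintegral_indicator hA]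
    refine lintegral_congr fun x => ?_
    by_cases hx : x ∈ A <;> simp [Set.indicator_apply, hx]
  rw [hterm1, withDensity_apply _ hA]
  -- combine the two set integrals
  rw [← lintegral_add_left (f := fun x : ℝ =>
    ENNReal.ofReal (a * x ^ (a-1)) * ENNReal.ofReal (1 - x)) ((hD.mul hOneX) : Measurable fun x : ℝ =>
    ENNReal.ofReal (a * x ^ (a-1)) * ENNReal.ofReal (1 - x))]
  -- pointwise identity on A ∩ [0,1]
  rw [hμ, Measure.restrict_restrict hA]
  refine setLIntegral_congr_fun (hA.inter measurableSet_Icc) ?_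
  intro x hx; beta_reduce
  obtain ⟨-, hx0, hx1⟩ := hx
  rcases eq_or_ne x 0 with rfl | hne
  · simp [Real.zero_rpow ha.ne']
  · have hxa : x ^ a = x ^ (a-1) * x := by
      rw [← Real.rpow_add_one hne, sub_add_cancel]
    rw [← ENNReal.ofReal_mul (mul_nonneg ha.le (Real.rpow_nonneg hx0 _)),
      ← ENNReal.ofReal_add (mul_nonneg (mul_nonneg ha.le (Real.rpow_nonneg hx0 _)) (by linarith))
        (mul_nonneg ha.le (Real.rpow_nonneg hx0 _))]
    congr 1
    rw [hxa]
    ring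
end

section
/- Let (τ_i)_{i≥0} be i.i.d. nonnegative integer random variables with P(τ₁ ≥ ℓ) ≤ c ℓ^{−p} for some 1 < p < 2 and c > 0. Then there is a constant C depending only on p and c such that for all n ≥ 1, P(∑_{i=0}^{n−1} (τ_i − E τ_i) ≥ n/2) ≤ C n^{1−p}. -/
open MeasureTheory ProbabilityTheory Real


lemma aux_gauss (m : ℕ) : ∑ ℓ ∈ Finset.range m, (2*(ℓ:ℝ)+1) = (m:ℝ)^2 := by
  induction m with
  | zero => simp
  | succ k ih => rw [Finset.sum_range_succ, ih]; push_cast; ring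

lemma aux_sq_eq (n y : ℕ) :
    ((min y n : ℕ) : ℝ)^2
      = ∑ ℓ ∈ Finset.range n, (2*(ℓ:ℝ)+1) * (if ℓ+1 ≤ y then (1:ℝ) else 0) := by
  have h0 : ∑ ℓ ∈ Finset.range (min y n), (2*(ℓ:ℝ)+1) * (if ℓ+1 ≤ y then (1:ℝ) else 0)
      = ∑ ℓ ∈ Finset.range n, (2*(ℓ:ℝ)+1) * (if ℓ+1 ≤ y then (1:ℝ) else 0) := by
    apply Finset.sum_subset (Finset.range_subset_range.mpr (min_le_right _ _))
    intro ℓ hℓ hℓ'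
    simp only [Finset.mem_range] at hℓ hℓ'
    have h : ¬ (ℓ + 1 ≤ y) := by omega
    simp [h]
  rw [← h0]
  have h1 : ∀ ℓ ∈ Finset.range (min y n),
      (2*(ℓ:ℝ)+1) * (if ℓ+1 ≤ y then (1:ℝ) else 0) = 2*(ℓ:ℝ)+1 := by
    intro ℓ hℓ
    simp only [Finset.mem_range] at hℓ
    have h : ℓ + 1 ≤ y := by omega
    simp [h]
  rw [Finset.sum_congr rfl h1, aux_gauss]

lemma aux_sum_rpow (p : ℝ) (hp1 : 1 < p) (hp2 : p < 2) (n : ℕ) (hn : 1 ≤ n) :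
    ∑ ℓ ∈ Finset.range n, ((ℓ:ℝ)+1) ^ (1-p) ≤ (1 + 1/(2-p)) * (n:ℝ) ^ (2-p) := by
  have hq : (0:ℝ) < 2 - p := by linarith
  obtain ⟨k, rfl⟩ : ∃ k, n = k + 1 := ⟨n - 1, by omega⟩
  have hant : AntitoneOn (fun x : ℝ => x ^ (1-p)) (Set.Icc 1 (1 + (k:ℕ))) := by
    intro x hx y hy hxy
    exact Real.rpow_le_rpow_of_nonpos (lt_of_lt_of_le one_pos hx.1) hxy (by linarith)
  have key := hant.sum_le_integral
  rw [integral_rpow (Or.inl (by linarith : (-1:ℝ) < 1 - p))] at key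
  have h1 : ∑ i ∈ Finset.range k, ((1:ℝ) + ((i:ℕ)+1:ℕ)) ^ (1-p)
      ≤ ((1 + (k:ℝ)) ^ (1-p+1) - 1 ^ (1-p+1)) / (1-p+1) := by exact_mod_cast key
  have hsplit : ∑ ℓ ∈ Finset.range (k+1), ((ℓ:ℝ)+1) ^ (1-p)
      = (∑ i ∈ Finset.range k, (((i:ℝ)+1)+1) ^ (1-p)) + 1 := by
    rw [Finset.sum_range_succ']
    push_cast
    norm_num
  have h2 : ∑ i ∈ Finset.range k, (((i:ℝ)+1)+1) ^ (1-p)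
      ≤ ((1 + (k:ℝ)) ^ (2-p) - 1) / (2-p) := by
    have he : (1:ℝ) - p + 1 = 2 - p := by ring
    rw [he, Real.one_rpow] at h1
    convert h1 using 2 with i
    push_cast
    ring
  have hNN : (1 + (k:ℝ)) = (((k+1:ℕ)):ℝ) := by push_cast; ring
  rw [hNN] at h2
  have hone : (1:ℝ) ≤ (((k+1:ℕ)):ℝ) ^ (2-p) :=
    Real.one_le_rpow (by exact_mod_cast Nat.succ_le_succ (Nat.zero_le k)) hq.le
  rw [hsplit]
  set A := (((k+1:ℕ)):ℝ) ^ (2-p) with hA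
  have hB : (0:ℝ) < 1/(2-p) := by positivity
  have hrw : (A - 1)/(2-p) = (A - 1) * (1/(2-p)) := by rw [div_eq_mul_one_div]
  rw [hrw] at h2
  nlinarith [h2, hone, hB]

/-- For i.i.d. nonnegative integer variables with tail `P(τ ≥ ℓ) ≤ c ℓ^{−p}`, `1 < p < 2`,
one has `P(∑_{i<n} (τ_i − Eτ_i) ≥ n/2) ≤ C n^{1−p}`. -/
theorem stmt_17 (p c : ℝ) (hp : p ∈ Set.Ioo (1:ℝ) 2) (hc : 0 < c) :
    ∃ C : ℝ, 0 < C ∧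
      ∀ (Ω : Type) [MeasurableSpace Ω] (μ : Measure Ω), IsProbabilityMeasure μ →
      ∀ (τ : ℕ → Ω → ℕ),
        (∀ i, Measurable (τ i)) →
        iIndepFun τ μ →
        (∀ i, μ.map (τ i) = μ.map (τ 0)) →
        Integrable (fun ω => (τ 0 ω : ℝ)) μ →
        (∀ ℓ : ℕ, 1 ≤ ℓ → (μ {ω | ℓ ≤ τ 0 ω}).toReal ≤ c * (ℓ : ℝ) ^ (-p)) →
        ∀ n : ℕ, 1 ≤ n →
          (μ {ω | (n : ℝ) / 2 ≤
              ∑ i ∈ Finset.range n, ((τ i ω : ℝ) - ∫ ω', (τ i ω' : ℝ) ∂μ)}).toReal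
            ≤ C * (n : ℝ) ^ (1 - p) := by
  obtain ⟨hp1, hp2⟩ := hp
  have hq : (0:ℝ) < 2 - p := by linarith
  refine ⟨c + 8 * c * (1 + 1/(2-p)), by positivity, ?_⟩
  intro Ω _ μ hμ τ hmeas hindep hident hintτ htail n hn
  have hn' : (0:ℝ) < n := by exact_mod_cast hn
  -- transfer of integrals and measures via identical distribution
  have hInt_eq : ∀ (g : ℕ → ℝ) (i : ℕ), ∫ ω, g (τ i ω) ∂μ = ∫ ω, g (τ 0 ω) ∂μ := by
    intro g i
    rw [← integral_map (hmeas i).aemeasurable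
        (measurable_from_top (f := g)).aestronglyMeasurable,
      hident i,
      integral_map (hmeas 0).aemeasurable (measurable_from_top (f := g)).aestronglyMeasurable]
  have hMeas_eq : ∀ (k i : ℕ), μ {ω | k ≤ τ i ω} = μ {ω | k ≤ τ 0 ω} := by
    intro k i
    have h1 : μ {ω | k ≤ τ i ω} = (μ.map (τ i)) (Set.Ici k) := by
      rw [Measure.map_apply (hmeas i) measurableSet_Ici]; rfl
    have h2 : μ {ω | k ≤ τ 0 ω} = (μ.map (τ 0)) (Set.Ici k) := by
      rw [Measure.map_apply (hmeas 0) measurableSet_Ici]; rfl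
    rw [h1, h2, hident i]
  -- truncated variables
  set X : ℕ → Ω → ℝ := fun i ω => ((min (τ i ω) n : ℕ) : ℝ) with hX
  have hXmeas : ∀ i, Measurable (X i) := fun i =>
    (measurable_from_top (f := fun y : ℕ => ((min y n : ℕ) : ℝ))).comp (hmeas i)
  have hXmem : ∀ i, MemLp (X i) 2 μ := by
    intro i
    apply memLp_of_bounded (a := 0) (b := (n:ℝ)) ?_ (hXmeas i).aestronglyMeasurable
    filter_upwards with ω
    refine ⟨by positivity, ?_⟩
    exact_mod_cast Nat.cast_le.mpr (min_le_right (τ i ω) n)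
  have hτint : ∀ i, Integrable (fun ω => (τ i ω : ℝ)) μ := by
    intro i
    have h : Integrable (fun y : ℕ => (y:ℝ)) (μ.map (τ i)) := by
      rw [hident i,
        integrable_map_measure (measurable_from_top (f := fun y : ℕ => (y:ℝ))).aestronglyMeasurable
          (hmeas 0).aemeasurable]
      exact hintτ
    rwa [integrable_map_measure
        (measurable_from_top (f := fun y : ℕ => (y:ℝ))).aestronglyMeasurable
        (hmeas i).aemeasurable] at h
  have hEX_le : ∀ i, ∫ ω, X i ω ∂μ ≤ ∫ ω, (τ i ω : ℝ) ∂μ := by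
    intro i
    apply integral_mono ((hXmem i).integrable one_le_two) (hτint i)
    intro ω
    exact_mod_cast Nat.cast_le.mpr (min_le_left (τ i ω) n)
  -- the sum
  set S : Ω → ℝ := ∑ i ∈ Finset.range n, X i with hS
  have hSmem : MemLp S 2 μ := memLp_finset_sum' _ (fun i _ => hXmem i)
  have hpair : Set.Pairwise ↑(Finset.range n) (fun i j => IndepFun (X i) (X j) μ) := by
    intro i _ j _ hij
    exact (hindep.indepFun hij).comp
      (measurable_from_top (f := fun y : ℕ => ((min y n : ℕ) : ℝ)))
      (measurable_from_top (f := fun y : ℕ => ((min y n : ℕ) : ℝ)))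
  have hvar : variance S μ = ∑ i ∈ Finset.range n, variance (X i) μ :=
    IndepFun.variance_sum (fun i _ => hXmem i) hpair
  -- second moment bound
  set V : ℝ := ∫ ω, ((min (τ 0 ω) n : ℕ) : ℝ)^2 ∂μ with hV
  have hvar_le : ∀ i, variance (X i) μ ≤ V := by
    intro i
    rw [variance_eq_sub (hXmem i)]
    have h2 : (μ[(X i)^2] : ℝ) = V := by
      rw [hV]
      exact hInt_eq (fun y => ((min y n : ℕ):ℝ)^2) i
    rw [h2]
    nlinarith [sq_nonneg (μ[X i])]
  have hVle : V ≤ 2*c*(1 + 1/(2-p)) * (n:ℝ)^(2-p) := by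
    have hrw : V = ∑ ℓ ∈ Finset.range n, (2*(ℓ:ℝ)+1) * (μ {ω | ℓ+1 ≤ τ 0 ω}).toReal := by
      rw [hV]
      have e1 : ∫ ω, ((min (τ 0 ω) n : ℕ) : ℝ)^2 ∂μ
          = ∫ ω, ∑ ℓ ∈ Finset.range n, (2*(ℓ:ℝ)+1) * (if ℓ+1 ≤ τ 0 ω then (1:ℝ) else 0) ∂μ := by
        congr 1; funext ω; exact aux_sq_eq n (τ 0 ω)
      rw [e1, integral_finset_sum]
      · apply Finset.sum_congr rfl
        intro ℓ _
        have hms : MeasurableSet {ω | ℓ+1 ≤ τ 0 ω} := hmeas 0 measurableSet_Ici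
        have e2 : (fun ω => (2*(ℓ:ℝ)+1) * (if ℓ+1 ≤ τ 0 ω then (1:ℝ) else 0))
            = fun ω => (2*(ℓ:ℝ)+1) * Set.indicator {ω | ℓ+1 ≤ τ 0 ω} (fun _ => (1:ℝ)) ω := by
          funext ω
          rw [Set.indicator_apply]
          simp [Set.mem_setOf_eq]
        rw [e2, integral_const_mul, integral_indicator_const (1:ℝ) hms]
        simp [measureReal_def]
      · intro ℓ _
        apply Integrable.const_mul
        have hms : MeasurableSet {ω | ℓ+1 ≤ τ 0 ω} := hmeas 0 measurableSet_Ici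
        have e2 : (fun ω => (if ℓ+1 ≤ τ 0 ω then (1:ℝ) else 0))
            = Set.indicator {ω | ℓ+1 ≤ τ 0 ω} (fun _ => (1:ℝ)) := by
          funext ω
          rw [Set.indicator_apply]
          simp [Set.mem_setOf_eq]
        rw [e2]
        exact (integrable_const (1:ℝ)).indicator hms
    rw [hrw]
    have hterm : ∀ ℓ ∈ Finset.range n,
        (2*(ℓ:ℝ)+1) * (μ {ω | ℓ+1 ≤ τ 0 ω}).toReal ≤ 2*c*((ℓ:ℝ)+1)^(1-p) := by
      intro ℓ _
      have h1 := htail (ℓ+1) (by omega)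
      have h1' : (μ {ω | ℓ+1 ≤ τ 0 ω}).toReal ≤ c * ((ℓ:ℝ)+1)^(-p) := by
        push_cast at h1; exact h1
      calc (2*(ℓ:ℝ)+1) * (μ {ω | ℓ+1 ≤ τ 0 ω}).toReal
          ≤ (2*((ℓ:ℝ)+1)) * (c * ((ℓ:ℝ)+1)^(-p)) := by
            apply mul_le_mul (by linarith) h1' ENNReal.toReal_nonneg (by positivity)
        _ = 2*c*((ℓ:ℝ)+1)^(1-p) := by
            rw [show (1:ℝ)-p = 1 + (-p) by ring, Real.rpow_add (by positivity), Real.rpow_one]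
            ring
    calc ∑ ℓ ∈ Finset.range n, (2*(ℓ:ℝ)+1) * (μ {ω | ℓ+1 ≤ τ 0 ω}).toReal
        ≤ ∑ ℓ ∈ Finset.range n, 2*c*((ℓ:ℝ)+1)^(1-p) := Finset.sum_le_sum hterm
      _ = 2*c * ∑ ℓ ∈ Finset.range n, ((ℓ:ℝ)+1)^(1-p) := by rw [Finset.mul_sum]
      _ ≤ 2*c * ((1 + 1/(2-p)) * (n:ℝ)^(2-p)) :=
          mul_le_mul_of_nonneg_left (aux_sum_rpow p hp1 hp2 n hn) (by positivity)
      _ = 2*c*(1 + 1/(2-p)) * (n:ℝ)^(2-p) := by ring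
  -- event inclusion
  have hsub : {ω | (n:ℝ)/2 ≤ ∑ i ∈ Finset.range n, ((τ i ω : ℝ) - ∫ ω', (τ i ω' : ℝ) ∂μ)}
      ⊆ (⋃ i ∈ Finset.range n, {ω | n ≤ τ i ω}) ∪ {ω | (n:ℝ)/2 ≤ |S ω - μ[S]|} := by
    intro ω hω
    by_cases hB : ∃ i ∈ Finset.range n, n ≤ τ i ω
    · left; obtain ⟨i, hi, h⟩ := hB; exact Set.mem_biUnion hi h
    · right
      push_neg at hB
      simp only [Set.mem_setOf_eq] at hω ⊢
      have hXτ : ∀ i ∈ Finset.range n, X i ω = (τ i ω : ℝ) := by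
        intro i hi
        have h := hB i hi
        simp only [hX]
        congr 1
        omega
      have hSω : S ω = ∑ i ∈ Finset.range n, X i ω := by
        simp [hS, Finset.sum_apply]
      have hμS : μ[S] = ∑ i ∈ Finset.range n, ∫ ω', X i ω' ∂μ := by
        have e : μ[S] = ∫ ω', ∑ i ∈ Finset.range n, X i ω' ∂μ := by
          simp [hS, Finset.sum_apply]
        rw [e]
        exact integral_finset_sum _ (fun i _ => (hXmem i).integrable one_le_two)
      have hkey : ∑ i ∈ Finset.range n, ((τ i ω : ℝ) - ∫ ω', (τ i ω' : ℝ) ∂μ)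
          ≤ S ω - μ[S] := by
        rw [hSω, hμS, ← Finset.sum_sub_distrib]
        apply Finset.sum_le_sum
        intro i hi
        have h1 : (τ i ω : ℝ) = X i ω := (hXτ i hi).symm
        have h2 : ∫ ω', X i ω' ∂μ ≤ ∫ ω', (τ i ω' : ℝ) ∂μ := hEX_le i
        linarith
      exact le_trans (le_trans hω hkey) (le_abs_self _)
  -- union bound term
  have hB_le : (μ (⋃ i ∈ Finset.range n, {ω | n ≤ τ i ω})).toReal ≤ c * (n:ℝ)^(1-p) := by
    have h1 : μ (⋃ i ∈ Finset.range n, {ω | n ≤ τ i ω})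
        ≤ ∑ i ∈ Finset.range n, μ {ω | n ≤ τ i ω} := measure_biUnion_finset_le _ _
    have h2 : ∑ i ∈ Finset.range n, μ {ω | n ≤ τ i ω} = (n : ENNReal) * μ {ω | n ≤ τ 0 ω} := by
      rw [Finset.sum_congr rfl (fun i _ => hMeas_eq n i)]
      simp [Finset.sum_const, nsmul_eq_mul]
    have h3 : (μ (⋃ i ∈ Finset.range n, {ω | n ≤ τ i ω})).toReal
        ≤ ((n : ENNReal) * μ {ω | n ≤ τ 0 ω}).toReal := by
      apply ENNReal.toReal_mono
      · exact ENNReal.mul_ne_top (by simp) (measure_ne_top μ _)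
      · rw [← h2]; exact h1
    rw [ENNReal.toReal_mul, ENNReal.toReal_natCast] at h3
    calc (μ (⋃ i ∈ Finset.range n, {ω | n ≤ τ i ω})).toReal
        ≤ (n:ℝ) * (μ {ω | n ≤ τ 0 ω}).toReal := h3
      _ ≤ (n:ℝ) * (c * (n:ℝ)^(-p)) := mul_le_mul_of_nonneg_left (htail n hn) hn'.le
      _ = c * (n:ℝ)^(1-p) := by
          rw [show (1:ℝ)-p = 1 + (-p) by ring, Real.rpow_add hn', Real.rpow_one]
          ring
  -- Chebyshev term
  have hpow : (n:ℝ) * (n:ℝ)^(2-p) = (n:ℝ)^(1-p) * (n:ℝ)^2 := by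
    rw [show ((n:ℝ))^2 = (n:ℝ)^(2:ℝ) by rw [← Real.rpow_natCast (n:ℝ) 2]; norm_num,
      ← Real.rpow_add hn']
    nth_rewrite 1 [← Real.rpow_one (n:ℝ)]
    rw [← Real.rpow_add hn']
    congr 1
    ring
  have hC_le : (μ {ω | (n:ℝ)/2 ≤ |S ω - μ[S]|}).toReal
      ≤ 8*c*(1 + 1/(2-p)) * (n:ℝ)^(1-p) := by
    have hcheb := meas_ge_le_variance_div_sq (μ := μ) hSmem
      (by positivity : (0:ℝ) < (n:ℝ)/2)
    have h1 : (μ {ω | (n:ℝ)/2 ≤ |S ω - μ[S]|}).toReal ≤ variance S μ / ((n:ℝ)/2)^2 := by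
      have hnn : 0 ≤ variance S μ / ((n:ℝ)/2)^2 :=
        div_nonneg (variance_nonneg _ _) (by positivity)
      exact le_trans (ENNReal.toReal_mono ENNReal.ofReal_ne_top hcheb)
        (le_of_eq (ENNReal.toReal_ofReal hnn))
    have h2 : variance S μ ≤ 8*c*(1 + 1/(2-p)) * (n:ℝ)^(1-p) * ((n:ℝ)/2)^2 := by
      rw [hvar]
      calc ∑ i ∈ Finset.range n, variance (X i) μ
          ≤ ∑ i ∈ Finset.range n, V := Finset.sum_le_sum (fun i _ => hvar_le i)
        _ = (n:ℝ) * V := by simp [Finset.sum_const, nsmul_eq_mul]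
        _ ≤ (n:ℝ) * (2*c*(1 + 1/(2-p)) * (n:ℝ)^(2-p)) :=
            mul_le_mul_of_nonneg_left hVle hn'.le
        _ = 2*c*(1 + 1/(2-p)) * ((n:ℝ) * (n:ℝ)^(2-p)) := by ring
        _ = 2*c*(1 + 1/(2-p)) * ((n:ℝ)^(1-p) * (n:ℝ)^2) := by rw [hpow]
        _ = 8*c*(1 + 1/(2-p)) * (n:ℝ)^(1-p) * ((n:ℝ)/2)^2 := by ring
    calc (μ {ω | (n:ℝ)/2 ≤ |S ω - μ[S]|}).toReal
        ≤ variance S μ / ((n:ℝ)/2)^2 := h1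
      _ ≤ 8*c*(1 + 1/(2-p)) * (n:ℝ)^(1-p) := by
          rw [div_le_iff₀ (by positivity)]
          exact h2
  -- assemble
  have hfin : (μ {ω | (n:ℝ)/2 ≤ ∑ i ∈ Finset.range n, ((τ i ω : ℝ) - ∫ ω', (τ i ω' : ℝ) ∂μ)}).toReal
      ≤ (μ (⋃ i ∈ Finset.range n, {ω | n ≤ τ i ω})).toReal
        + (μ {ω | (n:ℝ)/2 ≤ |S ω - μ[S]|}).toReal := by
    have h1 : μ {ω | (n:ℝ)/2 ≤ ∑ i ∈ Finset.range n, ((τ i ω : ℝ) - ∫ ω', (τ i ω' : ℝ) ∂μ)}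
        ≤ μ (⋃ i ∈ Finset.range n, {ω | n ≤ τ i ω}) + μ {ω | (n:ℝ)/2 ≤ |S ω - μ[S]|} :=
      (measure_mono hsub).trans (measure_union_le _ _)
    have h2 := ENNReal.toReal_mono
      (ENNReal.add_ne_top.mpr ⟨measure_ne_top μ _, measure_ne_top μ _⟩) h1
    rwa [ENNReal.toReal_add (measure_ne_top μ _) (measure_ne_top μ _)] at h2
  calc (μ {ω | (n:ℝ)/2 ≤ ∑ i ∈ Finset.range n, ((τ i ω : ℝ) - ∫ ω', (τ i ω' : ℝ) ∂μ)}).toReal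
      ≤ (μ (⋃ i ∈ Finset.range n, {ω | n ≤ τ i ω})).toReal
        + (μ {ω | (n:ℝ)/2 ≤ |S ω - μ[S]|}).toReal := hfin
    _ ≤ c * (n:ℝ)^(1-p) + 8*c*(1 + 1/(2-p)) * (n:ℝ)^(1-p) := add_le_add hB_le hC_le
    _ = (c + 8 * c * (1 + 1/(2-p))) * (n:ℝ)^(1-p) := by ring
end
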